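/- (Main Theorem, NN-case, lower estimate.) Define B_*^{NN} = sup_{−M ≤ x < y ≤ N} (Σ_{n=x+1}^{y} v̂_n)^(1/p*) · [ (Σ_{i=−M}^{x} u_i)^(1−q*) + (Σ_{j=y}^{N} u_j)^(1−q*) ]^(−1/q*). If A ≥ 0 is a constant such that (Σ_{n=−M}^{N} u_n |x_n − m(x)|^q)^(1/q) ≤ A · (Σ_{n=−M+1}^{N} v_n |x_n − x_{n−1}|^p)^(1/p) holds for every real sequence (x_n)_{n=−M}^{N}, where m(x) is the unique real constant m satisfying Σ_{n=−M}^{N} u_n |x_n − m|^(q−2) (x_n − m) = 0, then A ≥ B_*^{NN}. -/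

import Mathlib

lemma nn_holder_two (q : ℝ) (hq : 1 < q) (U1 U2 c d : ℝ) (h1 : 0 < U1) (h2 : 0 < U2) :
    |c| + |d| ≤ (U1 * |c| ^ q + U2 * |d| ^ q) ^ (1/q) *
      (U1 ^ (1 - q/(q-1)) + U2 ^ (1 - q/(q-1))) ^ (1 - 1/q) := by
  have hq0 : (0:ℝ) < q := by linarith
  have hq1 : q - 1 ≠ 0 := by linarith
  have hconj : q.HolderConjugate (q/(q-1)) :=
    (Real.holderConjugate_iff_eq_conjExponent hq).2 rfl
  have key := Real.inner_le_Lp_mul_Lq (Finset.univ : Finset (Fin 2))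
    ![U1 ^ (1/q) * |c|, U2 ^ (1/q) * |d|] ![U1 ^ (-(1/q)), U2 ^ (-(1/q))] hconj
  have e2 : ∀ (U x : ℝ), 0 < U → abs (U ^ (1/q) * |x|) ^ q = U * |x| ^ q := by
    intro U x hU
    rw [abs_of_nonneg (mul_nonneg (Real.rpow_nonneg hU.le _) (abs_nonneg _)),
      Real.mul_rpow (Real.rpow_nonneg hU.le _) (abs_nonneg _), ← Real.rpow_mul hU.le,
      one_div_mul_cancel hq0.ne', Real.rpow_one]
  have e3 : ∀ (U : ℝ), 0 < U → abs (U ^ (-(1/q))) ^ (q/(q-1)) = U ^ (1 - q/(q-1)) := by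
    intro U hU
    rw [abs_of_nonneg (Real.rpow_nonneg hU.le _), ← Real.rpow_mul hU.le]
    congr 1
    field_simp
    ring
  have e4 : 1/(q/(q-1)) = 1 - 1/q := by
    rw [one_div_div]
    field_simp
  have e5 : ∀ (U x : ℝ), 0 < U → U ^ (1/q) * |x| * U ^ (-(1/q)) = |x| := by
    intro U x hU
    rw [mul_comm (U ^ (1/q)) |x|, mul_assoc, ← Real.rpow_add hU]
    simp
  simp only [Fin.sum_univ_two, Matrix.cons_val_zero, Matrix.cons_val_one, Matrix.head_cons] at key
  rw [e2 U1 c h1, e2 U2 d h2, e3 U1 h1, e3 U2 h2, e4, e5 U1 c h1, e5 U2 d h2] at key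
  exact key

lemma nn_cont_phi (q : ℝ) (hq : 1 < q) : Continuous (fun t : ℝ => |t| ^ (q-2) * t) := by
  rw [continuous_iff_continuousAt]
  intro x
  rcases eq_or_ne x 0 with rfl | hx
  · have habs : ∀ t : ℝ, ‖|t| ^ (q-2) * t‖ = |t| ^ (q-1) := by
      intro t
      rcases eq_or_ne t 0 with rfl | ht
      · simp [Real.zero_rpow (show q - 1 ≠ 0 by linarith)]
      · rw [norm_mul, Real.norm_eq_abs, abs_of_nonneg (Real.rpow_nonneg (abs_nonneg t) _),
          Real.norm_eq_abs, ← Real.rpow_add_one (abs_ne_zero.mpr ht)]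
        ring_nf
    have hc : Continuous fun t : ℝ => |t| ^ (q-1) :=
      continuous_abs.rpow_const (fun t => Or.inr (by linarith))
    have h0 : |(0:ℝ)| ^ (q-2) * (0:ℝ) = 0 := by simp
    rw [ContinuousAt, h0, tendsto_zero_iff_norm_tendsto_zero]
    have := hc.tendsto 0
    simp only [abs_zero, Real.zero_rpow (show q - 1 ≠ 0 by linarith)] at this
    exact this.congr (fun t => (habs t).symm)
  · exact ((continuous_abs.continuousAt.rpow_const (Or.inl (abs_ne_zero.mpr hx))).mul
      continuousAt_id)

-- key lemma: the per-pair estimate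
lemma nn_key (p q : ℝ) (hp : 1 < p) (hpq : p ≤ q)
    (M N : ℤ) (hMN : -M ≤ N)
    (u v : ℤ → ℝ)
    (hu : ∀ n ∈ Finset.Icc (-M) N, 0 < u n)
    (hv : ∀ n ∈ Finset.Icc (-M) N, 0 < v n)
    (A : ℝ) (hA : 0 ≤ A)
    (hineq : ∀ x : ℤ → ℝ, ∀ m : ℝ,
      (∑ n ∈ Finset.Icc (-M) N, u n * |x n - m| ^ (q-2) * (x n - m) = 0) →
      (∑ n ∈ Finset.Icc (-M) N, u n * |x n - m| ^ q) ^ (1/q) ≤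
        A * (∑ n ∈ Finset.Icc (-M+1) N, v n * |x n - x (n-1)| ^ p) ^ (1/p))
    (a b : ℤ) (ha : -M ≤ a) (hab : a < b) (hb : b ≤ N) :
    (∑ n ∈ Finset.Icc (a+1) b, v n ^ (1 - p/(p-1))) ^ (1 - 1/p) *
        ((∑ i ∈ Finset.Icc (-M) a, u i) ^ (1 - q/(q-1)) +
          (∑ j ∈ Finset.Icc b N, u j) ^ (1 - q/(q-1))) ^ (-(1 - 1/q)) ≤ A := by
  have hq : 1 < q := lt_of_lt_of_le hp hpq
  have hp0 : (0:ℝ) < p := by linarith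
  have hq0 : (0:ℝ) < q := by linarith
  have hp1 : p - 1 ≠ 0 := by linarith
  set e : ℝ := 1 - p/(p-1) with he
  set vh : ℤ → ℝ := fun i => v i ^ e with hvh
  -- positivity of vh on the interval
  have hvhpos : ∀ i ∈ Finset.Icc (a+1) b, 0 < vh i := by
    intro i hi
    rw [Finset.mem_Icc] at hi
    exact Real.rpow_pos_of_pos (hv i (Finset.mem_Icc.mpr ⟨by omega, by omega⟩)) _
  set V : ℝ := ∑ i ∈ Finset.Icc (a+1) b, vh i with hVdef
  have hne : (Finset.Icc (a+1) b).Nonempty := by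
    rw [Finset.nonempty_Icc]; omega
  have hV : 0 < V := Finset.sum_pos hvhpos hne
  set y : ℤ → ℝ := fun n => ∑ i ∈ Finset.Icc (a+1) (min n b), vh i with hy
  have hy_low : ∀ n : ℤ, n ≤ a → y n = 0 := by
    intro n hn
    have : min n b = n := min_eq_left (by omega)
    rw [hy]; simp only [this]
    rw [Finset.Icc_eq_empty (by omega), Finset.sum_empty]
  have hy_high : ∀ n : ℤ, b ≤ n → y n = V := by
    intro n hn
    have : min n b = b := min_eq_right hn
    rw [hy]; simp only [this]; rfl
  have hy_nonneg : ∀ n : ℤ, 0 ≤ y n := by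
    intro n
    apply Finset.sum_nonneg
    intro i hi
    rw [Finset.mem_Icc] at hi
    exact (hvhpos i (Finset.mem_Icc.mpr ⟨hi.1, le_trans hi.2 (min_le_right _ _)⟩)).le
  have hy_le : ∀ n : ℤ, y n ≤ V := by
    intro n
    apply Finset.sum_le_sum_of_subset_of_nonneg
    · exact Finset.Icc_subset_Icc_right (min_le_right _ _)
    · intro i hi _
      exact (hvhpos i hi).le
  -- existence of the generalized mean m
  set F : ℝ → ℝ := fun t => ∑ n ∈ Finset.Icc (-M) N, u n * |y n - t| ^ (q-2) * (y n - t)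
    with hF
  have hFcont : Continuous F := by
    apply continuous_finset_sum
    intro n _
    have h1 : Continuous fun t : ℝ => u n * (|y n - t| ^ (q-2) * (y n - t)) :=
      continuous_const.mul ((nn_cont_phi q hq).comp (continuous_const.sub continuous_id))
    convert h1 using 2 with t
    ring
  have hIccne : (Finset.Icc (-M) N).Nonempty := by rw [Finset.nonempty_Icc]; omega
  have hFpos : 0 < F (-1) := by
    apply Finset.sum_pos _ hIccne
    intro n hn
    have h1 : 0 < y n - (-1) := by have := hy_nonneg n; linarith
    have h2 : 0 < |y n - (-1)| ^ (q-2) := Real.rpow_pos_of_pos (by rwa [abs_of_pos h1]) _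
    exact mul_pos (mul_pos (hu n hn) h2) h1
  have hFneg : F (V+1) < 0 := by
    apply Finset.sum_neg _ hIccne
    intro n hn
    have h1 : y n - (V+1) < 0 := by have := hy_le n; linarith
    have h2 : 0 < |y n - (V+1)| ^ (q-2) :=
      Real.rpow_pos_of_pos (abs_pos.mpr (ne_of_lt h1)) _
    exact mul_neg_of_pos_of_neg (mul_pos (hu n hn) h2) h1
  obtain ⟨m, -, hm⟩ := intermediate_value_Icc' (by linarith : (-1:ℝ) ≤ V+1)
    hFcont.continuousOn ⟨hFneg.le, hFpos.le⟩
  have hmain := hineq y m hm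
  -- compute the right-hand sum
  have hyd : ∀ n : ℤ, a + 1 ≤ n → n ≤ b → y n - y (n-1) = vh n := by
    intro n h1 h2
    have hmn : min n b = n := min_eq_left h2
    have hmn' : min (n-1) b = n - 1 := min_eq_left (by omega)
    have hins : Finset.Icc (a+1) n = insert n (Finset.Icc (a+1) (n-1)) := by
      ext i
      simp only [Finset.mem_Icc, Finset.mem_insert]
      omega
    have hnotin : n ∉ Finset.Icc (a+1) (n-1) := by
      simp only [Finset.mem_Icc]; omega
    rw [hy]; simp only [hmn, hmn']
    rw [hins, Finset.sum_insert hnotin]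
    ring
  have hS2 : ∑ n ∈ Finset.Icc (-M+1) N, v n * |y n - y (n-1)| ^ p = V := by
    have hterm : ∀ n ∈ Finset.Icc (-M+1) N,
        v n * |y n - y (n-1)| ^ p = if n ∈ Finset.Icc (a+1) b then vh n else 0 := by
      intro n hn
      rw [Finset.mem_Icc] at hn
      by_cases hnab : n ∈ Finset.Icc (a+1) b
      · rw [if_pos hnab]
        obtain ⟨h1, h2⟩ := Finset.mem_Icc.mp hnab
        rw [hyd n h1 h2, abs_of_pos (hvhpos n hnab)]
        have hvp : 0 < v n := hv n (Finset.mem_Icc.mpr ⟨by omega, by omega⟩)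
        rw [hvh]
        calc v n * (v n ^ e) ^ p = v n ^ (1:ℝ) * v n ^ (e*p) := by
              rw [Real.rpow_one, ← Real.rpow_mul hvp.le]
          _ = v n ^ (1 + e*p) := (Real.rpow_add hvp 1 (e*p)).symm
          _ = v n ^ e := by
              congr 1
              rw [he]
              field_simp
              ring
      · rw [if_neg hnab]
        rw [Finset.mem_Icc] at hnab
        have hzero : y n - y (n-1) = 0 := by
          rcases le_or_gt n a with h | h
          · rw [hy_low n h, hy_low (n-1) (by omega)]; ring
          · have hbn : b ≤ n := by omega
            rw [hy_high n hbn, hy_high (n-1) (by omega)]; ring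
        rw [hzero, abs_zero, Real.zero_rpow hp0.ne', mul_zero]
    rw [Finset.sum_congr rfl hterm, Finset.sum_ite_mem,
      Finset.inter_eq_right.mpr (by
        intro i hi
        rw [Finset.mem_Icc] at *
        omega)]
  rw [hS2] at hmain
  -- the lower bound on the left-hand sum
  set U1 : ℝ := ∑ i ∈ Finset.Icc (-M) a, u i with hU1def
  set U2 : ℝ := ∑ j ∈ Finset.Icc b N, u j with hU2def
  have hsub1 : Finset.Icc (-M) a ⊆ Finset.Icc (-M) N := by
    apply Finset.Icc_subset_Icc_right; omega
  have hsub2 : Finset.Icc b N ⊆ Finset.Icc (-M) N := by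
    apply Finset.Icc_subset_Icc_left; omega
  have hU1 : 0 < U1 :=
    Finset.sum_pos (fun i hi => hu i (hsub1 hi)) (by rw [Finset.nonempty_Icc]; omega)
  have hU2 : 0 < U2 :=
    Finset.sum_pos (fun i hi => hu i (hsub2 hi)) (by rw [Finset.nonempty_Icc]; omega)
  set T : ℝ := U1 * |m| ^ q + U2 * |V - m| ^ q with hTdef
  have hTnonneg : 0 ≤ T := by positivity
  have hge : T ≤ ∑ n ∈ Finset.Icc (-M) N, u n * |y n - m| ^ q := by
    have e1 : ∑ n ∈ Finset.Icc (-M) a, u n * |y n - m| ^ q = U1 * |m| ^ q := by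
      rw [Finset.sum_congr rfl (fun n hn => by
        rw [hy_low n (Finset.mem_Icc.mp hn).2, zero_sub, abs_neg]), ← Finset.sum_mul]
    have e2 : ∑ n ∈ Finset.Icc b N, u n * |y n - m| ^ q = U2 * |V - m| ^ q := by
      rw [Finset.sum_congr rfl (fun n hn => by
        rw [hy_high n (Finset.mem_Icc.mp hn).1]), ← Finset.sum_mul]
    have hdisj : Disjoint (Finset.Icc (-M) a) (Finset.Icc b N) := by
      rw [Finset.disjoint_left]
      intro i hi hib
      rw [Finset.mem_Icc] at hi hib
      omega
    calc T = ∑ n ∈ Finset.Icc (-M) a, u n * |y n - m| ^ q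
            + ∑ n ∈ Finset.Icc b N, u n * |y n - m| ^ q := by rw [e1, e2]
      _ = ∑ n ∈ Finset.Icc (-M) a ∪ Finset.Icc b N, u n * |y n - m| ^ q :=
          (Finset.sum_union hdisj).symm
      _ ≤ _ := by
          apply Finset.sum_le_sum_of_subset_of_nonneg
          · exact Finset.union_subset hsub1 hsub2
          · intro i hi _
            exact mul_nonneg (hu i hi).le (Real.rpow_nonneg (abs_nonneg _) q)
  set K : ℝ := U1 ^ (1 - q/(q-1)) + U2 ^ (1 - q/(q-1)) with hKdef
  have hK : 0 < K := by positivity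
  have hKe : 0 < K ^ (1 - 1/q) := Real.rpow_pos_of_pos hK _
  have hVp : 0 < V ^ (1/p) := Real.rpow_pos_of_pos hV _
  have hHold : V ≤ T ^ (1/q) * K ^ (1 - 1/q) := by
    have h1 : V ≤ |m| + |V - m| := by
      calc V = m + (V - m) := by ring
        _ ≤ |m| + |V - m| := add_le_add (le_abs_self _) (le_abs_self _)
    exact h1.trans (nn_holder_two q hq U1 U2 m (V - m) hU1 hU2)
  have hchain : V ≤ A * V ^ (1/p) * K ^ (1 - 1/q) := by
    have h2 : T ^ (1/q) ≤ (∑ n ∈ Finset.Icc (-M) N, u n * |y n - m| ^ q) ^ (1/q) :=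
      Real.rpow_le_rpow hTnonneg hge (by positivity)
    calc V ≤ T ^ (1/q) * K ^ (1 - 1/q) := hHold
      _ ≤ (∑ n ∈ Finset.Icc (-M) N, u n * |y n - m| ^ q) ^ (1/q) * K ^ (1 - 1/q) :=
          mul_le_mul_of_nonneg_right h2 hKe.le
      _ ≤ A * V ^ (1/p) * K ^ (1 - 1/q) := mul_le_mul_of_nonneg_right hmain hKe.le
  -- final algebra
  rw [Real.rpow_neg hK.le, ← div_eq_mul_inv, div_le_iff₀ hKe]
  have hVfrac : V ^ (1 - 1/p) = V / V ^ (1/p) := by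
    rw [eq_div_iff hVp.ne', ← Real.rpow_add hV]
    norm_num
  rw [hVfrac, div_le_iff₀ hVp]
  calc V ≤ A * V ^ (1/p) * K ^ (1 - 1/q) := hchain
    _ = A * K ^ (1 - 1/q) * V ^ (1/p) := by ring


/-- Main Theorem, NN-case, lower estimate.  In the hypothesis `hineq`, `m` ranges over the
(unique) generalized mean of the sequence `x` with respect to the weights `u`, characterized by
`∑ u_n |x_n - m|^(q-2) (x_n - m) = 0`. -/
theorem nn_lower (p q : ℝ) (hp : 1 < p) (hpq : p ≤ q)
    (M N : ℤ) (hMN : -M ≤ N)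
    (u v : ℤ → ℝ)
    (hu : ∀ n ∈ Finset.Icc (-M) N, 0 < u n)
    (hv : ∀ n ∈ Finset.Icc (-M) N, 0 < v n)
    (B : ℝ)
    (hB : B = ⨆ (a : ℤ) (b : ℤ) (_ : -M ≤ a ∧ a < b ∧ b ≤ N),
      (∑ n ∈ Finset.Icc (a+1) b, v n ^ (1 - p/(p-1))) ^ (1 - 1/p) *
        ((∑ i ∈ Finset.Icc (-M) a, u i) ^ (1 - q/(q-1)) +
          (∑ j ∈ Finset.Icc b N, u j) ^ (1 - q/(q-1))) ^ (-(1 - 1/q)))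
    (A : ℝ) (hA : 0 ≤ A)
    (hineq : ∀ x : ℤ → ℝ, ∀ m : ℝ,
      (∑ n ∈ Finset.Icc (-M) N, u n * |x n - m| ^ (q-2) * (x n - m) = 0) →
      (∑ n ∈ Finset.Icc (-M) N, u n * |x n - m| ^ q) ^ (1/q) ≤
        A * (∑ n ∈ Finset.Icc (-M+1) N, v n * |x n - x (n-1)| ^ p) ^ (1/p)) :
    B ≤ A := by
  rw [hB]
  refine Real.iSup_le (fun a => Real.iSup_le (fun b => Real.iSup_le (fun h => ?_) hA) hA) hA
  exact nn_key p q hp hpq M N hMN u v hu hv A hA hineq a b h.1 h.2.1 h.2.2
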